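/- The constraint set Y := {f ∈ X | 𝔇(f) = D₀ and ρ(f) = ρ₀} is invariant under the A × P action, and for any set S containing exactly one element of each orbit contained in Y, one has the identity of rational numbers ∑_{f ∈ S} (Nat.card P) / (Nat.card (stab f)) = (N_part · N_lab) / (Nat.card A). In particular the left-hand side depends on the equivalence relation ≈ only through the degree function d and is independent of the choice of e. (This is Proposition stabprop2, the key identity behind Theorem Dtheorem: ∑_{T} |Perm(B)| / Sym(T) = P(D(v), D_n) · |ν₀(D_n, ρ_n)| / |Aut(t)|.) -/

import Mathlib

section Aux

open Finset

section Aux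

lemma aux_map_comp_equiv {α β : Type*} [Fintype α] [Fintype β]
    (f : β → ℕ) (ec : α ≃ β) :
    Finset.univ.val.map (f ∘ ec) = Finset.univ.val.map f := by
  calc Finset.univ.val.map (f ∘ ec) = (Finset.univ.val.map ec).map f := by
        rw [Multiset.map_map]
    _ = Finset.univ.val.map f := by rw [Multiset.map_univ_val_equiv]

lemma aux_exists_perm {n : ℕ} (u v : Fin n → ℕ)
    (h : Finset.univ.val.map u = Finset.univ.val.map v) :
    ∃ π : Equiv.Perm (Fin n), ∀ i, v (π i) = u i := by
  have hperm : (List.ofFn (u ∘ Tuple.sort u)).Perm (List.ofFn (v ∘ Tuple.sort v)) := by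
    rw [← Multiset.coe_eq_coe]
    have h1 := Fin.univ_val_map (u ∘ Tuple.sort u)
    have h2 := Fin.univ_val_map (v ∘ Tuple.sort v)
    rw [← h1, ← h2, aux_map_comp_equiv u (Tuple.sort u), aux_map_comp_equiv v (Tuple.sort v), h]
  have heq : u ∘ Tuple.sort u = v ∘ Tuple.sort v := by
    have := List.Perm.eq_of_sortedLE
      ((Tuple.monotone_sort u).sortedLE_ofFn) ((Tuple.monotone_sort v).sortedLE_ofFn) hperm
    exact List.ofFn_inj.mp this
  refine ⟨(Tuple.sort u)⁻¹.trans (Tuple.sort v), fun i => ?_⟩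
  have := congrFun heq ((Tuple.sort u)⁻¹ i)
  simpa using this.symm

lemma aux_exists_equiv {α β : Type*} [Fintype α] [Fintype β]
    (u : α → ℕ) (v : β → ℕ) (h : Finset.univ.val.map u = Finset.univ.val.map v) :
    ∃ σ : α ≃ β, ∀ a, v (σ a) = u a := by
  have hcard : Fintype.card β = Fintype.card α := by
    have := congrArg Multiset.card h
    rw [Multiset.card_map, Multiset.card_map] at this
    exact this.symm
  have ea : α ≃ Fin (Fintype.card α) := Fintype.equivFin α
  have eb : β ≃ Fin (Fintype.card α) := (Fintype.equivFin β).trans (finCongr hcard)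
  obtain ⟨π, hπ⟩ := aux_exists_perm (u ∘ ea.symm) (v ∘ eb.symm) (by
    rw [aux_map_comp_equiv u ea.symm, aux_map_comp_equiv v eb.symm, h])
  refine ⟨ea.trans (π.trans eb.symm), fun a => ?_⟩
  have := hπ (ea a)
  simpa using this

variable {n I : ℕ}

def fib (f : Fin I → Fin n) (i : Fin n) : Finset (Fin I) :=
  Finset.univ.filter (fun x => f x = i)

lemma mem_fib {f : Fin I → Fin n} {i : Fin n} {x : Fin I} : x ∈ fib f i ↔ f x = i := by
  simp [fib]

lemma fib_nonempty {f : Fin I → Fin n} (hf : Function.Surjective f) (i : Fin n) :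
    (fib f i).Nonempty := by
  obtain ⟨x, hx⟩ := hf i
  exact ⟨x, mem_fib.mpr hx⟩

lemma fib_injective {f : Fin I → Fin n} (hf : Function.Surjective f) :
    Function.Injective (fib f) := by
  intro i j hij
  obtain ⟨x, hx⟩ := fib_nonempty hf i
  have hx' : x ∈ fib f j := hij ▸ hx
  rw [mem_fib] at hx hx'
  rw [← hx, hx']

def fiberPart (f : Fin I → Fin n) (hf : Function.Surjective f) :
    Finpartition (Finset.univ : Finset (Fin I)) where
  parts := Finset.univ.image (fib f)
  supIndep := by
    rw [Finset.supIndep_iff_pairwiseDisjoint]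
    rintro p hp q hq hpq
    simp only [coe_image, coe_univ, Set.image_univ, Set.mem_range] at hp hq
    obtain ⟨i, rfl⟩ := hp
    obtain ⟨j, rfl⟩ := hq
    refine Finset.disjoint_left.mpr fun x hxi hxj => hpq ?_
    rw [id_eq, mem_fib] at hxi
    rw [id_eq, mem_fib] at hxj
    rw [← hxi, hxj]
  sup_parts := by
    ext x
    simp only [mem_sup, mem_image, mem_univ, true_and, iff_true, id_eq]
    exact ⟨fib f (f x), ⟨f x, rfl⟩, mem_fib.mpr rfl⟩
  bot_notMem := by
    simp only [bot_eq_empty, mem_image, mem_univ, true_and, not_exists]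
    intro i h
    obtain ⟨x, hx⟩ := fib_nonempty hf i
    rw [h] at hx
    exact absurd hx (Finset.notMem_empty x)

lemma fiberPart_parts_val (f : Fin I → Fin n) (hf : Function.Surjective f) :
    (fiberPart f hf).parts.val = Finset.univ.val.map (fib f) :=
  Finset.image_val_of_injOn ((fib_injective hf).injOn)

lemma mem_fiberPart_parts {f : Fin I → Fin n} (hf : Function.Surjective f)
    {p : Finset (Fin I)} : p ∈ (fiberPart f hf).parts ↔ ∃ i, fib f i = p := by
  simp [fiberPart]

lemma fiberPart_card (f : Fin I → Fin n) (hf : Function.Surjective f) :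
    (fiberPart f hf).parts.card = n := by
  rw [Finset.card_def, fiberPart_parts_val, Multiset.card_map, ← Finset.card_def,
    Finset.card_univ, Fintype.card_fin]

lemma parts_attach_map (d : Fin I → ℕ) (Q : Finpartition (Finset.univ : Finset (Fin I))) :
    Finset.univ.val.map (fun p : {p // p ∈ Q.parts} => ∑ x ∈ (p : Finset (Fin I)), d x)
      = Q.parts.val.map (fun part => ∑ x ∈ part, d x) := by
  rw [Finset.univ_eq_attach, Finset.attach_val]
  conv_rhs => rw [← Multiset.attach_map_val Q.parts.val]
  rw [Multiset.map_map]
  rfl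

lemma aux_card_Y (d : Fin I → ℕ) (w e : Fin n → ℕ) (D₀ ρ₀ : Multiset ℕ)
    (he : Finset.univ.val.map e = D₀) :
    Nat.card {f : Fin I → Fin n | Function.Surjective f ∧
        Finset.univ.val.map (fun i => ∑ x ∈ fib f i, d x) = D₀ ∧
        Finset.univ.val.map (fun i => w i + ∑ x ∈ fib f i, d x) = ρ₀} =
    Nat.card {Q : Finpartition (Finset.univ : Finset (Fin I)) |
        Q.parts.card = n ∧ Q.parts.val.map (fun part => ∑ x ∈ part, d x) = D₀} *
    Nat.card {g : Equiv.Perm (Fin n) |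
        Finset.univ.val.map (fun i => w i + e (g i)) = ρ₀} := by
  classical
  set QS : Set (Finpartition (Finset.univ : Finset (Fin I))) :=
    {Q | Q.parts.card = n ∧ Q.parts.val.map (fun part => ∑ x ∈ part, d x) = D₀} with hQS
  set GS : Set (Equiv.Perm (Fin n)) :=
    {g | Finset.univ.val.map (fun i => w i + e (g i)) = ρ₀} with hGS
  set YS : Set (Fin I → Fin n) := {f | Function.Surjective f ∧
        Finset.univ.val.map (fun i => ∑ x ∈ fib f i, d x) = D₀ ∧
        Finset.univ.val.map (fun i => w i + ∑ x ∈ fib f i, d x) = ρ₀} with hYS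
  have hchoice : ∀ Q : QS, ∃ χ : Fin n ≃ {p // p ∈ Q.1.parts},
      ∀ i, (∑ x ∈ (χ i).1, d x) = e i := by
    rintro ⟨Q, hQcard, hQsum⟩
    exact aux_exists_equiv e (fun p : {p // p ∈ Q.parts} => ∑ x ∈ p.1, d x)
      (by rw [he, parts_attach_map d Q, hQsum])
  choose χ hχ using hchoice
  have hΦex : ∀ f : YS, ∃ pr : QS × GS,
      ∀ i, (χ pr.1 (pr.2.1 i)).1 = fib f.1 i := by
    rintro ⟨f, hsurj, hD, hρ⟩
    have hQmem : fiberPart f hsurj ∈ QS := by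
      refine ⟨fiberPart_card f hsurj, ?_⟩
      rw [fiberPart_parts_val, Multiset.map_map]
      exact hD
    set QF : QS := ⟨fiberPart f hsurj, hQmem⟩ with hQF
    have hmem : ∀ i, fib f i ∈ QF.1.parts := fun i =>
      (mem_fiberPart_parts hsurj).mpr ⟨i, rfl⟩
    set gfun : Fin n → Fin n := fun i => (χ QF).symm ⟨fib f i, hmem i⟩ with hgfun
    have ginj : Function.Injective gfun := by
      intro i j hij
      apply fib_injective hsurj
      have h1 : (⟨fib f i, hmem i⟩ : {p // p ∈ QF.1.parts}) = ⟨fib f j, hmem j⟩ := by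
        have := congrArg (χ QF) hij
        simpa [hgfun] using this
      exact congrArg Subtype.val h1
    have gbij := (Finite.injective_iff_bijective).mp ginj
    set g : Equiv.Perm (Fin n) := Equiv.ofBijective gfun gbij with hg
    have hkey : ∀ i, (χ QF (g i)).1 = fib f i := by
      intro i
      have h1 : g i = gfun i := rfl
      rw [h1, hgfun]
      simp
    have hgGS : g ∈ GS := by
      have heg : ∀ i, e (g i) = ∑ x ∈ fib f i, d x := by
        intro i
        rw [← hχ QF (g i), hkey i]
      show Finset.univ.val.map (fun i => w i + e (g i)) = ρ₀
      rw [show (fun i => w i + e (g i)) = (fun i => w i + ∑ x ∈ fib f i, d x) from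
        funext fun i => by rw [heg i]]
      exact hρ
    exact ⟨(QF, ⟨g, hgGS⟩), hkey⟩
  choose Φ hΦ using hΦex
  have hinj : Function.Injective Φ := by
    intro f f' hff
    have h1 := hΦ f
    have h2 := hΦ f'
    rw [hff] at h1
    apply Subtype.ext
    funext x
    have : fib f.1 (f'.1 x) = fib f'.1 (f'.1 x) := by rw [← h1, ← h2]
    have hx : x ∈ fib f.1 (f'.1 x) := this ▸ mem_fib.mpr rfl
    exact mem_fib.mp hx
  have hsurjΦ : Function.Surjective Φ := by
    rintro ⟨Q, g⟩
    set ψ : Fin n ≃ {p // p ∈ Q.1.parts} := g.1.trans (χ Q) with hψ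
    set f : Fin I → Fin n := fun x =>
      ψ.symm ⟨Q.1.part x, Q.1.part_mem.2 (mem_univ x)⟩ with hf
    have hfib : ∀ i, fib f i = (ψ i).1 := by
      intro i
      ext x
      rw [mem_fib]
      constructor
      · intro hfx
        have hsub : (⟨Q.1.part x, Q.1.part_mem.2 (mem_univ x)⟩
            : {p // p ∈ Q.1.parts}) = ψ i := by
          have := congrArg ψ hfx
          simpa [hf] using this
        have hpq : Q.1.part x = (ψ i).1 := congrArg Subtype.val hsub
        rw [← hpq]
        exact Q.1.mem_part (mem_univ x)
      · intro hxp
        have hpe : Q.1.part x = (ψ i).1 :=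
          Q.1.part_eq_of_mem (ψ i).2 hxp
        show ψ.symm _ = i
        rw [show (⟨Q.1.part x, Q.1.part_mem.2 (mem_univ x)⟩
            : {p // p ∈ Q.1.parts}) = ψ i from Subtype.ext hpe]
        simp
    have hfibχ : ∀ i, fib f i = (χ Q (g.1 i)).1 := fun i => hfib i
    have hsurjf : Function.Surjective f := by
      intro i
      obtain ⟨x, hx⟩ := Q.1.nonempty_of_mem_parts (ψ i).2
      refine ⟨x, ?_⟩
      have hxf : x ∈ fib f i := by rw [hfib i]; exact hx
      exact mem_fib.mp hxf
    have hDsum : ∀ i, (∑ x ∈ fib f i, d x) = e (g.1 i) := by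
      intro i
      rw [hfibχ i]
      exact hχ Q (g.1 i)
    have hfY : f ∈ YS := by
      refine ⟨hsurjf, ?_, ?_⟩
      · rw [show (fun i => ∑ x ∈ fib f i, d x) = (fun i => e (g.1 i)) from
          funext fun i => hDsum i]
        rw [show (fun i => e (g.1 i)) = e ∘ g.1 from rfl, aux_map_comp_equiv e g.1, he]
      · rw [show (fun i => w i + ∑ x ∈ fib f i, d x) = (fun i => w i + e (g.1 i)) from
          funext fun i => by rw [hDsum i]]
        exact g.2
    refine ⟨⟨f, hfY⟩, ?_⟩
    have hprop := hΦ ⟨f, hfY⟩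
    have himg : ∀ (QQ : QS) (gg : Fin n → Fin n),
        (∀ i, (χ QQ (gg i)).1 = fib f i) → QQ.1.parts
          = Finset.univ.image (fib f) := by
      intro QQ gg hgg
      have hsub : Finset.univ.image (fib f) ⊆ QQ.1.parts := by
        intro p hp
        simp only [mem_image, mem_univ, true_and] at hp
        obtain ⟨i, rfl⟩ := hp
        rw [← hgg i]
        exact (χ QQ (gg i)).2
      refine (Finset.eq_of_subset_of_card_le hsub ?_).symm
      rw [Finset.card_image_of_injective Finset.univ (fib_injective hsurjf),
        Finset.card_univ, Fintype.card_fin]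
      exact le_of_eq QQ.2.1
    have hQ1 : (Φ ⟨f, hfY⟩).1 = Q := by
      apply Subtype.ext
      apply Finpartition.ext
      rw [himg (Φ ⟨f, hfY⟩).1 (fun i => (Φ ⟨f, hfY⟩).2.1 i) hprop,
        himg Q (fun i => g.1 i) (fun i => (hfibχ i).symm)]
    have hprop2 : ∀ i, (χ Q ((Φ ⟨f, hfY⟩).2.1 i)).1 = fib f i := by
      rw [← hQ1]
      exact hprop
    have hg2 : (Φ ⟨f, hfY⟩).2 = g := by
      apply Subtype.ext
      apply Equiv.ext
      intro i
      have h3 : (χ Q ((Φ ⟨f, hfY⟩).2.1 i)).1 = (χ Q (g.1 i)).1 := by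
        rw [hprop2 i, hfibχ i]
      have h4 : χ Q ((Φ ⟨f, hfY⟩).2.1 i) = χ Q (g.1 i) := Subtype.ext h3
      exact (χ Q).injective h4
    exact Prod.ext hQ1 hg2
  have := Nat.card_eq_of_bijective Φ ⟨hinj, hsurjΦ⟩
  rw [this, Nat.card_prod]

def apAction (n I : ℕ) (A : Subgroup (Equiv.Perm (Fin n))) (P : Subgroup (Equiv.Perm (Fin I))) :
    MulAction (↥A × ↥P) (Fin I → Fin n) where
  smul q f := ⇑(q.1 : Equiv.Perm (Fin n)) ∘ f ∘ ⇑((q.2 : Equiv.Perm (Fin I))⁻¹)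
  one_smul f := by
    show ⇑((1 : ↥A) : Equiv.Perm (Fin n)) ∘ f ∘ _ = f
    funext x
    simp
  mul_smul q r f := by
    show ⇑((q.1 * r.1 : ↥A) : Equiv.Perm (Fin n)) ∘ f ∘ _ = _
    funext x
    simp [mul_inv_rev]
    rfl

end Aux



/-- Paper Proposition stabprop2 (key identity behind Theorem Dtheorem): the set
`Y = {f | f surjective, 𝔇(f) = D₀, ρ(f) = ρ₀}` is invariant under the `A × P` action
`(a,p) • f = a ∘ f ∘ p⁻¹`, and summing `|P| / |stab f|` over one representative `f` of
each orbit inside `Y` gives `P(D(v), D_n) · |ν₀(D_n, ρ_n)| / |Aut(t)|`; in particular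
the sum depends on the equivalence relation only through `d` and is independent of the
choice of `e`. -/
theorem articulation_weight_orbit_sum
    (n I : ℕ)
    (A : Subgroup (Equiv.Perm (Fin n)))
    (s : Setoid (Fin I)) (d : Fin I → ℕ)
    (hd : ∀ x y : Fin I, s.r x y → d x = d y)
    (P : Subgroup (Equiv.Perm (Fin I)))
    (hP : ∀ σ : Equiv.Perm (Fin I), σ ∈ P ↔ ∀ x, s.r (σ x) x)
    (w : Fin n → ℕ) (hw : ∀ a ∈ A, ∀ i, w (a i) = w i)
    (Df : (Fin I → Fin n) → Fin n → ℕ)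
    (hDf : ∀ (f : Fin I → Fin n) (i : Fin n),
      Df f i = ∑ x ∈ Finset.univ.filter (fun x => f x = i), d x)
    (Dmul ρ : (Fin I → Fin n) → Multiset ℕ)
    (hDmul : ∀ f, Dmul f = Finset.univ.val.map (Df f))
    (hρ : ∀ f, ρ f = Finset.univ.val.map fun i => w i + Df f i)
    (D₀ ρ₀ : Multiset ℕ) (hD₀ : Multiset.card D₀ = n)
    (Y : Set (Fin I → Fin n))
    (hY : Y = {f | Function.Surjective f ∧ Dmul f = D₀ ∧ ρ f = ρ₀})
    (e : Fin n → ℕ) (he : Finset.univ.val.map e = D₀)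
    (Nlab Npart : ℕ)
    (hNlab : Nlab = Nat.card {g : Equiv.Perm (Fin n) |
      Finset.univ.val.map (fun i => w i + e (g i)) = ρ₀})
    (hNpart : Npart = Nat.card {Q : Finpartition (Finset.univ : Finset (Fin I)) |
      Q.parts.card = n ∧ Q.parts.val.map (fun part => ∑ x ∈ part, d x) = D₀}) :
    (∀ f ∈ Y, ∀ a ∈ A, ∀ p ∈ P, (⇑a ∘ f ∘ ⇑p⁻¹) ∈ Y) ∧
    (∀ S : Finset (Fin I → Fin n),
      (∀ f ∈ S, f ∈ Y) →
      (∀ g ∈ Y, ∃! f, f ∈ S ∧ ∃ a ∈ A, ∃ p ∈ P, f = ⇑a ∘ g ∘ ⇑p⁻¹) →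
      ∑ f ∈ S, (Nat.card P : ℚ) /
          (Nat.card {q : ↥A × ↥P //
            ⇑(q.1 : Equiv.Perm (Fin n)) ∘ f ∘ ⇑(q.2 : Equiv.Perm (Fin I))⁻¹ = f} : ℚ) =
        ((Npart : ℚ) * (Nlab : ℚ)) / (Nat.card A : ℚ)) := by
  classical
  subst hY hNlab hNpart
  letI := apAction n I A P
  -- reindexing the degree function
  have hDfa : ∀ (f : Fin I → Fin n) (a : Equiv.Perm (Fin n)) (p : Equiv.Perm (Fin I)),
      p ∈ P → ∀ j, Df (⇑a ∘ f ∘ ⇑p⁻¹) j = Df f (a⁻¹ j) := by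
    intro f a p hp j
    rw [hDf, hDf]
    refine Finset.sum_equiv (p⁻¹ : Equiv.Perm (Fin I)) ?_ ?_
    · intro x
      simp only [Finset.mem_filter, Finset.mem_univ, true_and, Function.comp_apply]
      constructor
      · intro h
        rw [← h]
        simp
      · intro h
        rw [h]
        simp
    · intro x _
      exact hd x (p⁻¹ x) (s.symm ((hP p⁻¹).mp (P.inv_mem hp) x))
  have hwinv : ∀ a ∈ A, ∀ j, w j = w (a⁻¹ j) := by
    intro a ha j
    conv_lhs => rw [← Equiv.apply_symm_apply a j]
    exact hw a ha (a⁻¹ j)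
  have part1 : ∀ f ∈ ({f | Function.Surjective f ∧ Dmul f = D₀ ∧ ρ f = ρ₀} :
      Set (Fin I → Fin n)), ∀ a ∈ A, ∀ p ∈ P, (⇑a ∘ f ∘ ⇑p⁻¹) ∈
      ({f | Function.Surjective f ∧ Dmul f = D₀ ∧ ρ f = ρ₀} : Set (Fin I → Fin n)) := by
    rintro f ⟨hsurj, hD, hρf⟩ a ha p hp
    have hcomp : Df (⇑a ∘ f ∘ ⇑p⁻¹) = (Df f) ∘ ⇑(a⁻¹ : Equiv.Perm (Fin n)) :=
      funext (hDfa f a p hp)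
    refine ⟨?_, ?_, ?_⟩
    · intro j
      obtain ⟨x, hx⟩ := hsurj (a⁻¹ j)
      refine ⟨p x, ?_⟩
      simp [hx]
    · rw [hDmul, hcomp, aux_map_comp_equiv (Df f) (a⁻¹ : Equiv.Perm (Fin n)), ← hDmul f]
      exact hD
    · show ρ _ = ρ₀
      rw [hρ, hcomp]
      have hfun : (fun i => w i + ((Df f) ∘ ⇑(a⁻¹ : Equiv.Perm (Fin n))) i)
          = (fun i => w i + Df f i) ∘ ⇑(a⁻¹ : Equiv.Perm (Fin n)) := by
        funext i
        simp only [Function.comp_apply]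
        rw [← hwinv a ha i]
      rw [hfun, aux_map_comp_equiv (fun i => w i + Df f i) (a⁻¹ : Equiv.Perm (Fin n)), ← hρ f]
      exact hρf
  refine ⟨part1, ?_⟩
  intro S hSY huniq
  set Y : Set (Fin I → Fin n) := {f | Function.Surjective f ∧ Dmul f = D₀ ∧ ρ f = ρ₀} with hYdef
  -- orbit membership characterization
  have h3 : ∀ f g : Fin I → Fin n, g ∈ MulAction.orbit (↥A × ↥P) f ↔
      ∃ a ∈ A, ∃ p ∈ P, g = ⇑a ∘ f ∘ ⇑p⁻¹ := by
    intro f g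
    constructor
    · rintro ⟨q, rfl⟩
      exact ⟨q.1, q.1.2, q.2, q.2.2, rfl⟩
    · rintro ⟨a, ha, p, hp, rfl⟩
      exact ⟨(⟨a, ha⟩, ⟨p, hp⟩), rfl⟩
  have hsymm : ∀ f g : Fin I → Fin n, g ∈ MulAction.orbit (↥A × ↥P) f →
      f ∈ MulAction.orbit (↥A × ↥P) g := by
    rintro f g ⟨q, rfl⟩
    exact ⟨q⁻¹, by simp⟩
  have horbY : ∀ f ∈ Y, ∀ g ∈ MulAction.orbit (↥A × ↥P) f, g ∈ Y := by
    intro f hf g hg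
    obtain ⟨a, ha, p, hp, rfl⟩ := (h3 f g).mp hg
    exact part1 f hf a ha p hp
  -- finset versions
  set Ofin : (Fin I → Fin n) → Finset (Fin I → Fin n) :=
    fun f => Finset.univ.filter (· ∈ MulAction.orbit (↥A × ↥P) f) with hOfin
  have hcardO : ∀ f, (Ofin f).card = Nat.card (MulAction.orbit (↥A × ↥P) f) := by
    intro f
    rw [← Nat.card_eq_finsetCard]
    exact Nat.card_congr (Equiv.subtypeEquivRight (by simp [hOfin]))
  set Yfin : Finset (Fin I → Fin n) := Finset.univ.filter (· ∈ Y) with hYfin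
  -- fiber decomposition of Y
  set F : (Fin I → Fin n) → (Fin I → Fin n) :=
    fun g => if hg : g ∈ Y then (huniq g hg).choose else g with hF
  have hFspec : ∀ g (hg : g ∈ Y), F g ∈ S ∧ ∃ a ∈ A, ∃ p ∈ P, F g = ⇑a ∘ g ∘ ⇑p⁻¹ := by
    intro g hg
    have : F g = (huniq g hg).choose := by rw [hF]; simp [hg]
    rw [this]
    exact (huniq g hg).choose_spec.1
  have hF1 : ∀ g ∈ Yfin, F g ∈ S := by
    intro g hg
    rw [hYfin, Finset.mem_filter] at hg
    exact (hFspec g hg.2).1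
  have hYcard : Yfin.card = ∑ f ∈ S, (Yfin.filter (fun g => F g = f)).card :=
    Finset.card_eq_sum_card_fiberwise hF1
  have hfiber : ∀ f ∈ S, Yfin.filter (fun g => F g = f) = Ofin f := by
    intro f hf
    ext g
    rw [hOfin, hYfin]
    simp only [Finset.mem_filter, Finset.mem_univ, true_and]
    constructor
    · rintro ⟨hgY, hFg⟩
      obtain ⟨a, ha, p, hp, hFg2⟩ := (hFspec g hgY).2
      have : f ∈ MulAction.orbit (↥A × ↥P) g := (h3 g f).mpr ⟨a, ha, p, hp, hFg ▸ hFg2⟩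
      exact hsymm g f this
    · intro hg
      have hgY : g ∈ Y := horbY f (hSY f hf) g hg
      refine ⟨hgY, ?_⟩
      have hforb : f ∈ MulAction.orbit (↥A × ↥P) g := hsymm f g hg
      have hfprop : f ∈ S ∧ ∃ a ∈ A, ∃ p ∈ P, f = ⇑a ∘ g ∘ ⇑p⁻¹ :=
        ⟨hf, (h3 g f).mp hforb⟩
      have hFprop : F g ∈ S ∧ ∃ a ∈ A, ∃ p ∈ P, F g = ⇑a ∘ g ∘ ⇑p⁻¹ := hFspec g hgY
      exact (huniq g hgY).unique hFprop hfprop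
  have hYfc : Yfin.card = Nat.card Y := by
    rw [← Nat.card_eq_finsetCard]
    exact Nat.card_congr (Equiv.subtypeEquivRight (by intro x; rw [hYfin]; simp))
  have hA0 : (Nat.card ↥A : ℚ) ≠ 0 := Nat.cast_ne_zero.mpr Nat.card_pos.ne'
  have hterm : ∀ f ∈ S, (Nat.card P : ℚ) /
      (Nat.card {q : ↥A × ↥P //
        ⇑(q.1 : Equiv.Perm (Fin n)) ∘ f ∘ ⇑(q.2 : Equiv.Perm (Fin I))⁻¹ = f} : ℚ) =
      ((Ofin f).card : ℚ) / (Nat.card A : ℚ) := by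
    intro f hf
    have h2 : Nat.card {q : ↥A × ↥P //
        ⇑(q.1 : Equiv.Perm (Fin n)) ∘ f ∘ ⇑(q.2 : Equiv.Perm (Fin I))⁻¹ = f} =
        Nat.card (MulAction.stabilizer (↥A × ↥P) f) := rfl
    have h1 : Nat.card (MulAction.orbit (↥A × ↥P) f) *
        Nat.card (MulAction.stabilizer (↥A × ↥P) f) = Nat.card A * Nat.card P := by
      rw [← Nat.card_prod, Nat.card_congr (MulAction.orbitProdStabilizerEquivGroup (↥A × ↥P) f),
        Nat.card_prod]
    haveI : Nonempty (MulAction.stabilizer (↥A × ↥P) f) := ⟨1⟩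
    have hst0 : (Nat.card (MulAction.stabilizer (↥A × ↥P) f) : ℚ) ≠ 0 :=
      Nat.cast_ne_zero.mpr Nat.card_pos.ne'
    rw [h2, div_eq_div_iff hst0 hA0, hcardO f]
    norm_cast
    rw [h1]
    ring
  rw [Finset.sum_congr rfl hterm, ← Finset.sum_div]
  have hsum : ∑ f ∈ S, ((Ofin f).card : ℚ) = (Yfin.card : ℚ) := by
    rw [hYcard]
    push_cast
    exact Finset.sum_congr rfl fun f hf => by rw [hfiber f hf]
  rw [hsum, hYfc]
  have hYeq : Y = {f : Fin I → Fin n | Function.Surjective f ∧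
      Finset.univ.val.map (fun i => ∑ x ∈ fib f i, d x) = D₀ ∧
      Finset.univ.val.map (fun i => w i + ∑ x ∈ fib f i, d x) = ρ₀} := by
    rw [hYdef]
    ext f
    have h1 : Df f = fun i => ∑ x ∈ fib f i, d x := funext fun i => hDf f i
    simp only [Set.mem_setOf_eq]
    rw [hDmul f, hρ f, h1]
  rw [hYeq, aux_card_Y d w e D₀ ρ₀ he]
  push_cast
  ring
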